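/- Let B > 0. There exists C > 0 such that for all t ∈ (0,1], | Σ_{n=1}^{∞} n^{−3/2} (1 − e^{−tB(2n+1)}) − 2√(2πBt) | ≤ C t. -/

import Mathlib

open MeasureTheory Set


namespace LandauAux

noncomputable def hh (a x : ℝ) : ℝ := x ^ (-(3:ℝ)/2) * (1 - Real.exp (-(a*x)))

lemma one_sub_exp_nonneg {y : ℝ} (hy : 0 ≤ y) : 0 ≤ 1 - Real.exp (-y) := by
  have : Real.exp (-y) ≤ Real.exp 0 := Real.exp_le_exp.2 (by linarith)
  simpa using this

lemma one_sub_exp_le (y : ℝ) : 1 - Real.exp (-y) ≤ y := by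
  have := Real.add_one_le_exp (-y)
  linarith

lemma one_sub_exp_le_one {y : ℝ} (hy : 0 ≤ y) : 1 - Real.exp (-y) ≤ 1 := by
  have := Real.exp_pos (-y); linarith

lemma hh_nonneg {a x : ℝ} (ha : 0 ≤ a) (hx : 0 ≤ x) : 0 ≤ hh a x :=
  mul_nonneg (Real.rpow_nonneg hx _) (one_sub_exp_nonneg (by positivity))

lemma hh_le_rpow32 {a x : ℝ} (ha : 0 ≤ a) (hx : 0 ≤ x) : hh a x ≤ x ^ (-(3:ℝ)/2) := by
  have h1 : 1 - Real.exp (-(a*x)) ≤ 1 := one_sub_exp_le_one (by positivity)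
  calc hh a x ≤ x ^ (-(3:ℝ)/2) * 1 :=
        mul_le_mul_of_nonneg_left h1 (Real.rpow_nonneg hx _)
    _ = _ := mul_one _

lemma hh_le_sqrtinv {a x : ℝ} (ha : 0 ≤ a) (hx : 0 < x) : hh a x ≤ a * x ^ (-(1:ℝ)/2) := by
  have h1 : 1 - Real.exp (-(a*x)) ≤ a * x := one_sub_exp_le (a*x)
  have h2 : x ^ (-(3:ℝ)/2) * x = x ^ (-(1:ℝ)/2) := by
    nth_rewrite 2 [← Real.rpow_one x]
    rw [← Real.rpow_add hx]
    norm_num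
  calc hh a x ≤ x ^ (-(3:ℝ)/2) * (a * x) :=
        mul_le_mul_of_nonneg_left h1 (Real.rpow_nonneg hx.le _)
    _ = a * (x ^ (-(3:ℝ)/2) * x) := by ring
    _ = a * x ^ (-(1:ℝ)/2) := by rw [h2]


lemma continuousOn_hh (a : ℝ) : ContinuousOn (hh a) (Ioi 0) := by
  intro x hx
  have hx0 : (0:ℝ) < x := hx
  apply ContinuousAt.continuousWithinAt
  exact ((Real.continuousAt_rpow_const x _ (Or.inl hx0.ne')).mul
    (by fun_prop))

lemma integrableOn_hh_Ioc {a : ℝ} (ha : 0 ≤ a) : IntegrableOn (hh a) (Ioc 0 1) := by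
  have hint : IntegrableOn (fun x : ℝ => a * x ^ (-(1:ℝ)/2)) (Ioc 0 1) := by
    apply Integrable.const_mul
    have := (intervalIntegral.intervalIntegrable_rpow' (a := 0) (b := 1)
      (r := -(1:ℝ)/2) (by norm_num))
    rwa [intervalIntegrable_iff_integrableOn_Ioc_of_le (by norm_num)] at this
  refine Integrable.mono' hint ?_ ?_
  · exact ((continuousOn_hh a).mono (Ioc_subset_Ioi_self)).aestronglyMeasurable
      measurableSet_Ioc
  · filter_upwards [ae_restrict_mem measurableSet_Ioc] with x hx
    rw [Real.norm_eq_abs, abs_of_nonneg (hh_nonneg ha hx.1.le)]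
    exact hh_le_sqrtinv ha hx.1

lemma integrableOn_hh_Ioi1 {a : ℝ} (ha : 0 ≤ a) : IntegrableOn (hh a) (Ioi 1) := by
  refine Integrable.mono' (integrableOn_Ioi_rpow_of_lt (by norm_num : (-(3:ℝ)/2) < -1)
    one_pos) ?_ ?_
  · exact ((continuousOn_hh a).mono (fun x (hx : x ∈ Ioi (1:ℝ)) => mem_Ioi.2 (lt_trans one_pos hx))).aestronglyMeasurable
      measurableSet_Ioi
  · filter_upwards [ae_restrict_mem measurableSet_Ioi] with x hx
    have hx0 : (0:ℝ) < x := lt_trans one_pos hx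
    rw [Real.norm_eq_abs, abs_of_nonneg (hh_nonneg ha hx0.le)]
    exact hh_le_rpow32 ha hx0.le

lemma integrableOn_hh {a : ℝ} (ha : 0 ≤ a) : IntegrableOn (hh a) (Ioi 0) := by
  rw [← Ioc_union_Ioi_eq_Ioi (zero_le_one)]
  exact (integrableOn_hh_Ioc ha).union (integrableOn_hh_Ioi1 ha)


noncomputable def gg (a x : ℝ) : ℝ := x ^ (-(1:ℝ)/2) * Real.exp (-(a*x))

lemma gg_nonneg {a x : ℝ} (hx : 0 ≤ x) : 0 ≤ gg a x :=
  mul_nonneg (Real.rpow_nonneg hx _) (Real.exp_pos _).le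

lemma continuousOn_gg (a : ℝ) : ContinuousOn (gg a) (Ioi 0) := by
  intro x hx
  exact ContinuousAt.continuousWithinAt
    (((Real.continuousAt_rpow_const x _ (Or.inl (ne_of_gt hx))).mul (by fun_prop)))

lemma exp_le_inv {a x : ℝ} (ha : 0 < a) (hx : 0 < x) :
    Real.exp (-(a*x)) ≤ 1 / (a*x) := by
  rw [Real.exp_neg, one_div]
  exact inv_anti₀ (by positivity) (by nlinarith [Real.add_one_le_exp (a*x)])

lemma integrableOn_gg {a : ℝ} (ha : 0 < a) : IntegrableOn (gg a) (Ioi 0) := by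
  rw [← Ioc_union_Ioi_eq_Ioi (zero_le_one)]
  apply IntegrableOn.union
  · have hint : IntegrableOn (fun x : ℝ => x ^ (-(1:ℝ)/2)) (Ioc 0 1) := by
      have := (intervalIntegral.intervalIntegrable_rpow' (a := 0) (b := 1)
        (r := -(1:ℝ)/2) (by norm_num))
      rwa [intervalIntegrable_iff_integrableOn_Ioc_of_le (by norm_num)] at this
    refine Integrable.mono' hint ?_ ?_
    · exact ((continuousOn_gg a).mono (Ioc_subset_Ioi_self)).aestronglyMeasurable
        measurableSet_Ioc
    · filter_upwards [ae_restrict_mem measurableSet_Ioc] with x hx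
      rw [Real.norm_eq_abs, abs_of_nonneg (gg_nonneg hx.1.le)]
      calc gg a x ≤ x ^ (-(1:ℝ)/2) * 1 := by
            apply mul_le_mul_of_nonneg_left _ (Real.rpow_nonneg hx.1.le _)
            exact Real.exp_le_one_iff.2 (by nlinarith [hx.1])
        _ = x ^ (-(1:ℝ)/2) := mul_one _
  · refine Integrable.mono' ((integrableOn_Ioi_rpow_of_lt
      (by norm_num : (-(3:ℝ)/2) < -1) one_pos).const_mul (1/a)) ?_ ?_
    · exact ((continuousOn_gg a).mono (fun x (hx : x ∈ Ioi (1:ℝ)) => mem_Ioi.2 (lt_trans one_pos hx))).aestronglyMeasurable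
        measurableSet_Ioi
    · filter_upwards [ae_restrict_mem measurableSet_Ioi] with x hx
      have hx0 : (0:ℝ) < x := lt_trans one_pos hx
      rw [Real.norm_eq_abs, abs_of_nonneg (gg_nonneg hx0.le)]
      have h2 : x ^ (-(3:ℝ)/2) * x = x ^ (-(1:ℝ)/2) := by
        nth_rewrite 2 [← Real.rpow_one x]
        rw [← Real.rpow_add hx0]; norm_num
      have h3 : Real.exp (-(a*x)) ≤ 1/(a*x) := exp_le_inv ha hx0
      calc gg a x ≤ x ^ (-(1:ℝ)/2) * (1/(a*x)) :=
            mul_le_mul_of_nonneg_left h3 (Real.rpow_nonneg hx0.le _)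
        _ = 1/a * (x ^ (-(1:ℝ)/2) / x) := by ring
        _ = 1/a * x ^ (-(3:ℝ)/2) := by
            rw [← h2]; field_simp
lemma integral_gg {a : ℝ} (ha : 0 < a) :
    ∫ x in Ioi 0, gg a x = Real.sqrt Real.pi / Real.sqrt a := by
  have := Real.integral_rpow_mul_exp_neg_mul_Ioi (a := (1:ℝ)/2) (r := a) (by norm_num) ha
  have heq : ∀ x : ℝ, x ^ ((1:ℝ)/2 - 1) * Real.exp (-(a*x)) = gg a x := by
    intro x; norm_num [gg]
  rw [show ((1:ℝ)/2 - 1) = -(1:ℝ)/2 by norm_num] at this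
  unfold gg
  rw [this, Real.Gamma_one_half_eq, ← Real.sqrt_eq_rpow, one_div, Real.sqrt_inv,
    div_eq_inv_mul]


noncomputable def FF (a x : ℝ) : ℝ := -2 * x ^ (-(1:ℝ)/2) * (1 - Real.exp (-(a*x)))

lemma hasDerivAt_exp_part (a x : ℝ) :
    HasDerivAt (fun y => 1 - Real.exp (-(a*y))) (a * Real.exp (-(a*x))) x := by
  have h1 : HasDerivAt (fun y : ℝ => -(a*y)) (-a) x := by
    simpa using ((hasDerivAt_id x).const_mul (-a))
  have h2 := (Real.hasDerivAt_exp (-(a*x))).comp x h1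
  have h3 := h2.const_sub 1
  exact h3.congr_deriv (by ring)

lemma hasDerivAt_FF {a x : ℝ} (hx : 0 < x) :
    HasDerivAt (FF a) (hh a x - 2*a*gg a x) x := by
  have h1 : HasDerivAt (fun y : ℝ => -2 * y ^ (-(1:ℝ)/2))
      (-2 * ((-(1:ℝ)/2) * x ^ (-(1:ℝ)/2 - 1))) x :=
    (Real.hasDerivAt_rpow_const (Or.inl hx.ne')).const_mul (-2)
  have h2 := h1.mul (hasDerivAt_exp_part a x)
  have e1 : x ^ (-(1:ℝ)/2 - 1) = x ^ (-(3:ℝ)/2) := by norm_num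
  refine h2.congr_deriv ?_
  rw [e1]
  unfold hh gg
  ring

lemma contWithinAt_FF {a : ℝ} (ha : 0 ≤ a) : ContinuousWithinAt (FF a) (Ici 0) 0 := by
  have h0 : FF a 0 = 0 := by simp [FF]
  show Filter.Tendsto (FF a) (nhdsWithin 0 (Ici 0)) (nhds (FF a 0))
  rw [h0]
  apply squeeze_zero_norm' (a := fun x => 2 * a * x ^ ((1:ℝ)/2))
  · filter_upwards [self_mem_nhdsWithin] with x (hx : (0:ℝ) ≤ x)
    rcases eq_or_lt_of_le hx with rfl | hx0
    · simp [FF]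
    · have h1 : 0 ≤ 1 - Real.exp (-(a*x)) := one_sub_exp_nonneg (by positivity)
      have h2 : 1 - Real.exp (-(a*x)) ≤ a * x := one_sub_exp_le _
      have h3 : x ^ (-(1:ℝ)/2) * x = x ^ ((1:ℝ)/2) := by
        nth_rewrite 2 [← Real.rpow_one x]
        rw [← Real.rpow_add hx0]; norm_num
      rw [Real.norm_eq_abs, FF, abs_mul, abs_mul]
      rw [abs_of_nonneg h1, abs_of_nonneg (Real.rpow_nonneg hx0.le _)]
      calc |(-2:ℝ)| * x ^ (-(1:ℝ)/2) * (1 - Real.exp (-(a*x)))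
          ≤ 2 * x ^ (-(1:ℝ)/2) * (a*x) := by
            rw [abs_of_nonpos (by norm_num : (-2:ℝ) ≤ 0)]
            have : (0:ℝ) ≤ 2 * x ^ (-(1:ℝ)/2) := by positivity
            nlinarith [mul_le_mul_of_nonneg_left h2 this]
        _ = 2 * a * (x ^ (-(1:ℝ)/2) * x) := by ring
        _ = 2 * a * x ^ ((1:ℝ)/2) := by rw [h3]
  · have : Filter.Tendsto (fun x : ℝ => 2 * a * x ^ ((1:ℝ)/2)) (nhds 0) (nhds 0) := by
      have hc : ContinuousAt (fun x : ℝ => x ^ ((1:ℝ)/2)) 0 :=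
        Real.continuousAt_rpow_const 0 _ (Or.inr (by norm_num))
      have := hc.tendsto.const_mul (2*a)
      simpa [Real.zero_rpow] using this
    exact this.mono_left nhdsWithin_le_nhds

lemma tendsto_FF_atTop {a : ℝ} (ha : 0 ≤ a) :
    Filter.Tendsto (FF a) Filter.atTop (nhds 0) := by
  apply squeeze_zero_norm' (a := fun x => 2 * x ^ (-((1:ℝ)/2)))
  · filter_upwards [Filter.eventually_gt_atTop (0:ℝ)] with x hx0
    have h1 : 0 ≤ 1 - Real.exp (-(a*x)) := one_sub_exp_nonneg (by positivity)
    have h2 : 1 - Real.exp (-(a*x)) ≤ 1 := one_sub_exp_le_one (by positivity)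
    rw [Real.norm_eq_abs, FF, abs_mul, abs_mul, abs_of_nonneg h1,
      abs_of_nonpos (by norm_num : (-2:ℝ) ≤ 0),
      abs_of_nonneg (Real.rpow_nonneg hx0.le _),
      (by norm_num : -((1:ℝ)/2) = -(1:ℝ)/2)]
    nlinarith [Real.rpow_nonneg hx0.le (-(1:ℝ)/2)]
  · simpa using (tendsto_rpow_neg_atTop (by norm_num : (0:ℝ) < 1/2)).const_mul (2:ℝ)

lemma integral_hh {a : ℝ} (ha : 0 < a) :
    ∫ x in Ioi 0, hh a x = 2 * Real.sqrt (Real.pi * a) := by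
  have hint : IntegrableOn (fun x => hh a x - 2*a*gg a x) (Ioi 0) :=
    (integrableOn_hh ha.le).sub ((integrableOn_gg ha).const_mul _)
  have key := integral_Ioi_of_hasDerivAt_of_tendsto (contWithinAt_FF ha.le)
    (fun x hx => hasDerivAt_FF hx) hint (tendsto_FF_atTop ha.le)
  have h0 : FF a 0 = 0 := by simp [FF]
  rw [h0, sub_zero] at key
  have hsplit : ∫ x in Ioi 0, (hh a x - 2*a*gg a x)
      = (∫ x in Ioi 0, hh a x) - 2*a*(∫ x in Ioi 0, gg a x) := by
    rw [integral_sub (integrableOn_hh ha.le) ((integrableOn_gg ha).const_mul _),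
      integral_const_mul]
  rw [hsplit, integral_gg ha] at key
  have : (∫ x in Ioi 0, hh a x) = 2*a*(Real.sqrt Real.pi / Real.sqrt a) := by linarith
  rw [this, Real.sqrt_mul Real.pi_nonneg,
    show 2*a*(Real.sqrt Real.pi/Real.sqrt a)
      = 2*Real.sqrt Real.pi*(a/Real.sqrt a) by ring, Real.div_sqrt]
  ring


noncomputable def dh (a x : ℝ) : ℝ :=
  (-(3:ℝ)/2) * x ^ (-(3:ℝ)/2 - 1) * (1 - Real.exp (-(a*x)))
    + x ^ (-(3:ℝ)/2) * (a * Real.exp (-(a*x)))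

lemma hasDerivAt_hh {a x : ℝ} (hx : 0 < x) : HasDerivAt (hh a) (dh a x) x := by
  have h1 : HasDerivAt (fun y : ℝ => y ^ (-(3:ℝ)/2))
      ((-(3:ℝ)/2) * x ^ (-(3:ℝ)/2 - 1)) x :=
    Real.hasDerivAt_rpow_const (Or.inl hx.ne')
  exact h1.mul (hasDerivAt_exp_part a x)

lemma dh_bound {a m x : ℝ} (ha : 0 < a) (hm : 1 ≤ m) (hmx : m ≤ x) :
    |dh a x| ≤ (5/2) * a * m ^ (-(3:ℝ)/2) := by
  have hx0 : (0:ℝ) < x := lt_of_lt_of_le (lt_of_lt_of_le one_pos hm) hmx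
  have hm0 : (0:ℝ) < m := lt_of_lt_of_le one_pos hm
  have hmono : x ^ (-(3:ℝ)/2) ≤ m ^ (-(3:ℝ)/2) :=
    Real.rpow_le_rpow_of_nonpos hm0 hmx (by norm_num)
  have hxm : (0:ℝ) ≤ x ^ (-(3:ℝ)/2) := Real.rpow_nonneg hx0.le _
  have e1 : x ^ (-(3:ℝ)/2 - 1) * x = x ^ (-(3:ℝ)/2) := by
    nth_rewrite 2 [← Real.rpow_one x]
    rw [← Real.rpow_add hx0]; norm_num
  have hexp1 : 0 ≤ 1 - Real.exp (-(a*x)) := one_sub_exp_nonneg (by positivity)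
  have hexp2 : 1 - Real.exp (-(a*x)) ≤ a*x := one_sub_exp_le _
  have hexp3 : Real.exp (-(a*x)) ≤ 1 := Real.exp_le_one_iff.2 (by nlinarith)
  have hexp4 : 0 ≤ Real.exp (-(a*x)) := (Real.exp_pos _).le
  have h52 : (0:ℝ) ≤ x ^ (-(3:ℝ)/2 - 1) := Real.rpow_nonneg hx0.le _
  have habs : |dh a x| ≤ (3/2) * (x ^ (-(3:ℝ)/2 - 1) * (a*x))
      + x ^ (-(3:ℝ)/2) * a := by
    unfold dh
    refine (abs_add_le _ _).trans (add_le_add ?_ ?_)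
    · rw [abs_mul, abs_mul, abs_of_nonneg h52, abs_of_nonneg hexp1,
        (by norm_num : |(-(3:ℝ)/2)| = 3/2)]
      nlinarith [mul_le_mul_of_nonneg_left hexp2 h52]
    · rw [abs_mul, abs_mul, abs_of_nonneg hxm, abs_of_nonneg (le_of_lt ha),
        abs_of_nonneg hexp4]
      nlinarith [mul_nonneg hxm ha.le,
        mul_nonneg (mul_nonneg hxm ha.le) (by linarith : 0 ≤ 1 - Real.exp (-(a*x)))]
  calc |dh a x| ≤ (3/2) * (x ^ (-(3:ℝ)/2 - 1) * (a*x)) + x ^ (-(3:ℝ)/2) * a := habs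
    _ = (3/2) * a * (x ^ (-(3:ℝ)/2 - 1) * x) + x ^ (-(3:ℝ)/2) * a := by ring
    _ = (3/2) * a * x ^ (-(3:ℝ)/2) + x ^ (-(3:ℝ)/2) * a := by rw [e1]
    _ ≤ (3/2) * a * m ^ (-(3:ℝ)/2) + m ^ (-(3:ℝ)/2) * a := by
        gcongr
    _ = (5/2) * a * m ^ (-(3:ℝ)/2) := by ring

lemma hh_sub_bound {a m x : ℝ} (ha : 0 < a) (hm : 1 ≤ m) (hx : x ∈ Icc m (m+1)) :
    |hh a x - hh a m| ≤ (5/2) * a * m ^ (-(3:ℝ)/2) := by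
  have hC : ∀ y ∈ Icc m (m+1), ‖dh a y‖ ≤ (5/2) * a * m ^ (-(3:ℝ)/2) :=
    fun y hy => dh_bound ha hm hy.1
  have hd : ∀ y ∈ Icc m (m+1), HasDerivWithinAt (hh a) (dh a y) (Icc m (m+1)) y :=
    fun y hy => (hasDerivAt_hh (lt_of_lt_of_le (lt_of_lt_of_le one_pos hm) hy.1)).hasDerivWithinAt
  have := (convex_Icc m (m+1)).norm_image_sub_le_of_norm_hasDerivWithin_le hd hC
    (left_mem_Icc.2 (by linarith)) hx
  rw [Real.norm_eq_abs] at this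
  refine this.trans ?_
  have h1 : ‖x - m‖ ≤ 1 := by
    rw [Real.norm_eq_abs, abs_of_nonneg (by linarith [hx.1])]
    linarith [hx.2]
  have h2 : (0:ℝ) ≤ (5/2) * a * m ^ (-(3:ℝ)/2) := by positivity
  nlinarith

lemma cell_bound {a m : ℝ} (ha : 0 < a) (hm : 1 ≤ m) :
    |hh a m - ∫ x in Ioc m (m+1), hh a x| ≤ (5/2) * a * m ^ (-(3:ℝ)/2) := by
  have hvol : volume (Ioc m (m+1)) = 1 := by
    rw [Real.volume_Ioc]; norm_num
  have hintm : IntegrableOn (hh a) (Ioc m (m+1)) :=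
    (integrableOn_hh_Ioi1 ha.le).mono_set (fun x hx => lt_of_le_of_lt hm hx.1)
  have hconst : ∫ _x in Ioc m (m+1), hh a m = hh a m := by
    rw [setIntegral_const, measureReal_def, hvol]; simp
  have heq : hh a m - ∫ x in Ioc m (m+1), hh a x
      = ∫ x in Ioc m (m+1), (hh a m - hh a x) := by
    rw [integral_sub (integrableOn_const (C := hh a m) (by rw [hvol]; norm_num)) hintm, hconst]
  rw [heq, ← Real.norm_eq_abs]
  calc ‖∫ x in Ioc m (m+1), (hh a m - hh a x)‖
      ≤ ((5/2) * a * m ^ (-(3:ℝ)/2)) * (volume (Ioc m (m+1))).toReal :=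
        norm_setIntegral_le_of_norm_le_const (by rw [hvol]; exact ENNReal.one_lt_top)
          (fun x hx => by
            rw [Real.norm_eq_abs, abs_sub_comm]
            exact hh_sub_bound ha hm ⟨hx.1.le, hx.2⟩)
    _ = _ := by rw [hvol]; simp


lemma union_cells : (⋃ n : ℕ, Ioc ((n:ℝ)+1) ((n:ℝ)+2)) = Ioi (1:ℝ) := by
  ext x
  simp only [mem_iUnion, mem_Ioc, mem_Ioi]
  constructor
  · rintro ⟨n, h1, _⟩
    have : (0:ℝ) ≤ (n:ℝ) := Nat.cast_nonneg n
    linarith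
  · intro hx
    have hx0 : (0:ℝ) < x := lt_trans one_pos hx
    have hk2 : 2 ≤ ⌈x⌉₊ := by
      have : 1 < ⌈x⌉₊ := by
        rw [Nat.lt_ceil]; exact_mod_cast hx
      omega
    refine ⟨⌈x⌉₊ - 2, ?_, ?_⟩
    · have hlt : ¬ (x ≤ (⌈x⌉₊ - 1 : ℕ)) := by
        intro hle
        have := Nat.ceil_le.2 hle
        omega
      push_neg at hlt
      have hcast : ((⌈x⌉₊ - 1 : ℕ) : ℝ) = ((⌈x⌉₊ - 2 : ℕ) : ℝ) + 1 := by
        push_cast [Nat.cast_sub (by omega : 1 ≤ ⌈x⌉₊), Nat.cast_sub hk2]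
        ring
      linarith [hcast ▸ hlt]
    · have := Nat.le_ceil x
      have hcast : ((⌈x⌉₊ : ℕ) : ℝ) = ((⌈x⌉₊ - 2 : ℕ) : ℝ) + 2 := by
        push_cast [Nat.cast_sub hk2]; ring
      linarith [hcast ▸ this]

lemma disjoint_cells : Pairwise (Function.onFun Disjoint fun n : ℕ => Ioc ((n:ℝ)+1) ((n:ℝ)+2)) := by
  have key : ∀ m n : ℕ, m < n → Disjoint (Ioc ((m:ℝ)+1) ((m:ℝ)+2)) (Ioc ((n:ℝ)+1) ((n:ℝ)+2)) := by
    intro m n hmn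
    apply Set.disjoint_left.2
    rintro x ⟨_, h2⟩ ⟨h3, _⟩
    have : (m:ℝ) + 1 ≤ (n:ℝ) := by exact_mod_cast Nat.succ_le_of_lt hmn
    linarith
  intro m n hmn
  rcases lt_or_gt_of_ne hmn with h | h
  · exact key m n h
  · exact (key n m h).symm

lemma summable_Z : Summable (fun n : ℕ => ((n:ℝ)+1) ^ (-(3:ℝ)/2)) := by
  have h := Real.summable_nat_rpow.2 (by norm_num : (-(3:ℝ)/2) < -1)
  have := (summable_nat_add_iff 1).2 h
  refine this.congr fun n => ?_
  push_cast; ring_nf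

noncomputable def Z : ℝ := ∑' n : ℕ, ((n:ℝ)+1) ^ (-(3:ℝ)/2)

lemma Z_nonneg : 0 ≤ Z := tsum_nonneg fun n => Real.rpow_nonneg (by positivity) _

lemma summable_hh {a : ℝ} (ha : 0 ≤ a) : Summable (fun n : ℕ => hh a ((n:ℝ)+1)) := by
  refine Summable.of_nonneg_of_le (fun n => hh_nonneg ha (by positivity))
    (fun n => hh_le_rpow32 ha (by positivity)) summable_Z

lemma integral_Ioi1_hh {a : ℝ} (ha : 0 ≤ a) :
    ∫ x in Ioi 1, hh a x = ∑' n : ℕ, ∫ x in Ioc ((n:ℝ)+1) ((n:ℝ)+2), hh a x := by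
  rw [← union_cells]
  exact integral_iUnion (fun n => measurableSet_Ioc) disjoint_cells
    (union_cells ▸ integrableOn_hh_Ioi1 ha)

lemma summable_cells {a : ℝ} (ha : 0 ≤ a) :
    Summable (fun n : ℕ => ∫ x in Ioc ((n:ℝ)+1) ((n:ℝ)+2), hh a x) :=
  (hasSum_integral_iUnion (fun n => measurableSet_Ioc) disjoint_cells
    (union_cells ▸ integrableOn_hh_Ioi1 ha)).summable

lemma integral_Ioc01_hh {a : ℝ} (ha : 0 < a) :
    (0 ≤ ∫ x in Ioc (0:ℝ) 1, hh a x) ∧ (∫ x in Ioc (0:ℝ) 1, hh a x) ≤ 2*a := by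
  constructor
  · exact setIntegral_nonneg measurableSet_Ioc (fun x hx => hh_nonneg ha.le hx.1.le)
  · have hdom : IntegrableOn (fun x : ℝ => a * x ^ (-(1:ℝ)/2)) (Ioc 0 1) := by
      apply Integrable.const_mul
      have := (intervalIntegral.intervalIntegrable_rpow' (a := 0) (b := 1)
        (r := -(1:ℝ)/2) (by norm_num))
      rwa [intervalIntegrable_iff_integrableOn_Ioc_of_le (by norm_num)] at this
    have h1 : (∫ x in Ioc (0:ℝ) 1, hh a x) ≤ ∫ x in Ioc (0:ℝ) 1, a * x ^ (-(1:ℝ)/2) :=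
      setIntegral_mono_on (integrableOn_hh_Ioc ha.le) hdom measurableSet_Ioc
        (fun x hx => hh_le_sqrtinv ha.le hx.1)
    have h2 : (∫ x in Ioc (0:ℝ) 1, a * x ^ (-(1:ℝ)/2)) = 2*a := by
      rw [integral_const_mul, ← intervalIntegral.integral_of_le (zero_le_one),
        integral_rpow (Or.inl (by norm_num)),
        show (-(1:ℝ)/2 + 1) = (1/2:ℝ) by norm_num,
        Real.one_rpow, Real.zero_rpow (by norm_num)]
      norm_num
      ring
    linarith
  
lemma sum_vs_integral {a : ℝ} (ha : 0 < a) :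
    |(∑' n : ℕ, hh a ((n:ℝ)+1)) - ∫ x in Ioi 0, hh a x| ≤ (2 + 5/2 * Z) * a := by
  have hsplit : (∫ x in Ioi (0:ℝ), hh a x)
      = (∫ x in Ioc (0:ℝ) 1, hh a x) + ∫ x in Ioi (1:ℝ), hh a x := by
    rw [← Ioc_union_Ioi_eq_Ioi (zero_le_one), setIntegral_union (Ioc_disjoint_Ioi le_rfl)
      measurableSet_Ioi (integrableOn_hh_Ioc ha.le) (integrableOn_hh_Ioi1 ha.le)]
  have hb : ∀ n : ℕ, |hh a ((n:ℝ)+1) - ∫ x in Ioc ((n:ℝ)+1) ((n:ℝ)+2), hh a x|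
      ≤ 5/2 * a * ((n:ℝ)+1) ^ (-(3:ℝ)/2) := by
    intro n
    have := cell_bound (m := (n:ℝ)+1) ha (by simp [Nat.cast_nonneg])
    rwa [show ((n:ℝ)+1)+1 = (n:ℝ)+2 by ring] at this
  have hdiff : (∑' n : ℕ, hh a ((n:ℝ)+1)) - (∫ x in Ioi (1:ℝ), hh a x)
      = ∑' n : ℕ, (hh a ((n:ℝ)+1) - ∫ x in Ioc ((n:ℝ)+1) ((n:ℝ)+2), hh a x) := by
    rw [integral_Ioi1_hh ha.le, Summable.tsum_sub (summable_hh ha.le) (summable_cells ha.le)]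
  have hZsum : HasSum (fun n : ℕ => 5/2 * a * ((n:ℝ)+1) ^ (-(3:ℝ)/2)) (5/2 * a * Z) :=
    summable_Z.hasSum.mul_left _
  have hts : |∑' n : ℕ, (hh a ((n:ℝ)+1) - ∫ x in Ioc ((n:ℝ)+1) ((n:ℝ)+2), hh a x)|
      ≤ 5/2 * a * Z := by
    rw [← Real.norm_eq_abs]
    exact tsum_of_norm_bounded hZsum (fun n => by rw [Real.norm_eq_abs]; exact hb n)
  obtain ⟨hI0, hI2⟩ := integral_Ioc01_hh ha
  calc |(∑' n : ℕ, hh a ((n:ℝ)+1)) - ∫ x in Ioi 0, hh a x|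
      = |((∑' n : ℕ, hh a ((n:ℝ)+1)) - (∫ x in Ioi (1:ℝ), hh a x))
          - (∫ x in Ioc (0:ℝ) 1, hh a x)| := by rw [hsplit]; congr 1; ring
    _ ≤ |(∑' n : ℕ, hh a ((n:ℝ)+1)) - (∫ x in Ioi (1:ℝ), hh a x)|
          + |∫ x in Ioc (0:ℝ) 1, hh a x| := abs_sub _ _
    _ ≤ 5/2 * a * Z + 2*a := by
        rw [hdiff] at *
        exact add_le_add hts (by rw [abs_of_nonneg hI0]; exact hI2)
    _ = (2 + 5/2 * Z) * a := by ring


lemma core {a : ℝ} (ha : 0 < a) :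
    |(∑' n : ℕ, hh a ((n:ℝ)+1)) - 2 * Real.sqrt (Real.pi * a)| ≤ (2 + 5/2 * Z) * a := by
  rw [← integral_hh ha]
  exact sum_vs_integral ha

end LandauAux

open LandauAux in
/-- `∑_{n=1}^∞ n^{-3/2} (1 - e^{-tB(2n+1)}) = 2√(2πBt) + O(t)` for
`t ∈ (0,1]`. The sum over `n ≥ 1` is written as a sum over `n : ℕ` of terms with
index `n + 1`. -/
theorem landau_sum_three_halves (B : ℝ) (hB : 0 < B) :
    ∃ C > 0, ∀ t ∈ Ioc (0 : ℝ) 1,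
      |(∑' n : ℕ, ((n + 1 : ℕ) : ℝ) ^ (-(3 : ℝ) / 2) *
          (1 - Real.exp (-t * (B * (2 * (n + 1) + 1))))) -
        2 * Real.sqrt (2 * Real.pi * B * t)| ≤ C * t := by
  refine ⟨B * (4 + 6 * Z) + 1, by nlinarith [Z_nonneg], ?_⟩
  rintro t ⟨ht0, ht1⟩
  set a : ℝ := 2 * B * t with ha_def
  have ha : 0 < a := by positivity
  set c : ℝ := 1 - Real.exp (-(B*t)) with hc_def
  have hc0 : 0 ≤ c := one_sub_exp_nonneg (by positivity)
  have hc1 : c ≤ B * t := one_sub_exp_le _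
  set u : ℕ → ℝ := fun n => ((n:ℝ)+1) ^ (-(3:ℝ)/2) * Real.exp (-(a*((n:ℝ)+1))) with hu_def
  have hu_nonneg : ∀ n, 0 ≤ u n := fun n =>
    mul_nonneg (Real.rpow_nonneg (by positivity) _) (Real.exp_pos _).le
  have hu_le : ∀ n, u n ≤ ((n:ℝ)+1) ^ (-(3:ℝ)/2) := by
    intro n
    have : Real.exp (-(a*((n:ℝ)+1))) ≤ 1 := Real.exp_le_one_iff.2 (by positivity |> neg_nonpos_of_nonneg)
    calc u n ≤ ((n:ℝ)+1) ^ (-(3:ℝ)/2) * 1 :=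
          mul_le_mul_of_nonneg_left this (Real.rpow_nonneg (by positivity) _)
      _ = _ := mul_one _
  have hsu : Summable u := Summable.of_nonneg_of_le hu_nonneg hu_le summable_Z
  have hterm : ∀ n : ℕ, ((n + 1 : ℕ) : ℝ) ^ (-(3 : ℝ) / 2) *
      (1 - Real.exp (-t * (B * (2 * (n + 1) + 1))))
      = hh a ((n:ℝ)+1) + u n * c := by
    intro n
    have hcast : ((n + 1 : ℕ) : ℝ) = (n:ℝ) + 1 := by push_cast; ring
    rw [hcast, hu_def, hc_def]
    unfold hh
    have hexp : -t * (B * (2 * ((n:ℝ) + 1) + 1)) = (-(a*((n:ℝ)+1))) + (-(B*t)) := by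
      rw [ha_def]; ring
    push_cast
    rw [hexp, Real.exp_add]
    ring
  have hsum_eq : (∑' n : ℕ, ((n + 1 : ℕ) : ℝ) ^ (-(3 : ℝ) / 2) *
      (1 - Real.exp (-t * (B * (2 * (n + 1) + 1)))))
      = (∑' n : ℕ, hh a ((n:ℝ)+1)) + (∑' n : ℕ, u n) * c := by
    rw [← tsum_mul_right]
    rw [← Summable.tsum_add (summable_hh ha.le) (hsu.mul_right c)]
    exact tsum_congr hterm
  have hsqrt : Real.sqrt (2 * Real.pi * B * t) = Real.sqrt (Real.pi * a) := by
    rw [ha_def]; ring_nf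
  have htsumu0 : 0 ≤ ∑' n, u n := tsum_nonneg hu_nonneg
  have htsumuZ : (∑' n, u n) ≤ Z := Summable.tsum_le_tsum hu_le hsu summable_Z
  have hmain := core ha
  have h2 : |(∑' n, u n) * c| ≤ Z * (B * t) := by
    rw [abs_of_nonneg (mul_nonneg htsumu0 hc0)]
    exact mul_le_mul htsumuZ hc1 hc0 Z_nonneg
  calc |(∑' n : ℕ, ((n + 1 : ℕ) : ℝ) ^ (-(3 : ℝ) / 2) *
      (1 - Real.exp (-t * (B * (2 * (n + 1) + 1))))) - 2 * Real.sqrt (2 * Real.pi * B * t)|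
      = |((∑' n : ℕ, hh a ((n:ℝ)+1)) - 2 * Real.sqrt (Real.pi * a)) + (∑' n, u n) * c| := by
        rw [hsum_eq, hsqrt]; congr 1; ring
    _ ≤ |(∑' n : ℕ, hh a ((n:ℝ)+1)) - 2 * Real.sqrt (Real.pi * a)| + |(∑' n, u n) * c| :=
        abs_add_le _ _
    _ ≤ (2 + 5/2 * Z) * a + Z * (B * t) := add_le_add hmain h2
    _ = B * (4 + 6 * Z) * t := by rw [ha_def]; ring
    _ ≤ (B * (4 + 6 * Z) + 1) * t := by nlinarith
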